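/- Let K ≥ 1 be an integer, α₁, α₂, α₃ > 0, μ₀ > 0 and γ₀ > 1/α₁. Then ∫_{(0,∞)×(μ₀,∞)×(γ₀,∞)} ( Σ_{n=0}^{K-1} (z₁/z₂)^n/n! + ((z₁/z₂)^K/K!)·e^{z₁/z₃} ) · α₁ α₂ α₃ e^{-α₁ z₁ - α₂ (z₂ - μ₀) - α₃ (z₃ - γ₀)} dz₁ dz₂ dz₃ < ∞. -/

import Mathlib

open MeasureTheory Set

open scoped ENNReal

lemma aux_pow_exp (n : ℕ) {δ : ℝ} (hδ : 0 < δ) :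
    IntegrableOn (fun z : ℝ => z ^ n * Real.exp (-δ * z)) (Set.Ioi 0) := by
  have h := integrableOn_rpow_mul_exp_neg_mul_rpow (s := (n : ℝ)) (p := 1)
    (by exact_mod_cast neg_one_lt_zero.trans_le (Nat.cast_nonneg n)) zero_lt_one hδ
  exact h.congr_fun (fun x hx => by
    beta_reduce; rw [Real.rpow_natCast, Real.rpow_one]) measurableSet_Ioi

lemma aux_poly_exp (K : ℕ) {μ₀ δ : ℝ} (hδ : 0 < δ) :
    IntegrableOn (fun z : ℝ => (1 + z / μ₀) ^ K * Real.exp (-δ * z)) (Set.Ioi 0) := by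
  have key : ∀ z : ℝ, (1 + z / μ₀) ^ K * Real.exp (-δ * z)
      = ∑ n ∈ Finset.range (K + 1),
          ((K.choose n : ℝ) / μ₀ ^ n) * (z ^ n * Real.exp (-δ * z)) := by
    intro z
    rw [add_comm (1 : ℝ), add_pow, Finset.sum_mul]
    refine Finset.sum_congr rfl fun n hn => ?_
    rw [div_pow]
    ring
  have h : IntegrableOn (fun z : ℝ => ∑ n ∈ Finset.range (K + 1),
      ((K.choose n : ℝ) / μ₀ ^ n) * (z ^ n * Real.exp (-δ * z))) (Set.Ioi 0) :=
    integrable_finset_sum _ fun n _ => (aux_pow_exp n hδ).const_mul _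
  exact h.congr_fun (fun z _ => (key z).symm) measurableSet_Ioi

/-- Finiteness of the normalizing constant for the M/M/K+M queue with
three-dimensional RBM rates. -/
theorem stmt_11 (K : ℕ) (hK : 1 ≤ K) (α₁ α₂ α₃ μ₀ γ₀ : ℝ)
    (hα₁ : 0 < α₁) (hα₂ : 0 < α₂) (hα₃ : 0 < α₃)
    (hμ₀ : 0 < μ₀) (hγ₀ : 1 / α₁ < γ₀) :
    ∫⁻ z₁ in Set.Ioi (0 : ℝ), ∫⁻ z₂ in Set.Ioi μ₀, ∫⁻ z₃ in Set.Ioi γ₀,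
        ENNReal.ofReal
          ((∑ n ∈ Finset.range K, (z₁ / z₂) ^ n / n.factorial
              + (z₁ / z₂) ^ K / K.factorial * Real.exp (z₁ / z₃))
            * (α₁ * α₂ * α₃
              * Real.exp (-α₁ * z₁ - α₂ * (z₂ - μ₀) - α₃ * (z₃ - γ₀))))
      < ⊤ := by
  have hγ₀pos : 0 < γ₀ := lt_trans (by positivity) hγ₀
  have h1 : 1 < γ₀ * α₁ := (div_lt_iff₀ hα₁).mp hγ₀
  have hδ : 0 < α₁ - 1 / γ₀ := by
    have : 1 / γ₀ < α₁ := (div_lt_iff₀ hγ₀pos).mpr (by nlinarith)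
    linarith
  set g₁ : ℝ → ℝ := fun z => ((K : ℝ) + 1) * α₁ *
      ((1 + z / μ₀) ^ K * Real.exp (-(α₁ - 1 / γ₀) * z)) with hg₁
  set g₂ : ℝ → ℝ := fun z => α₂ * Real.exp (-α₂ * (z - μ₀)) with hg₂
  set g₃ : ℝ → ℝ := fun z => α₃ * Real.exp (-α₃ * (z - γ₀)) with hg₃
  -- integrabilities
  have hI₁ : IntegrableOn g₁ (Set.Ioi (0 : ℝ)) :=
    (aux_poly_exp K hδ).const_mul _
  have hI₂ : IntegrableOn g₂ (Set.Ioi μ₀) := by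
    have h : IntegrableOn (fun z : ℝ => α₂ * Real.exp (α₂ * μ₀) * Real.exp (-α₂ * z))
        (Set.Ioi μ₀) := (exp_neg_integrableOn_Ioi μ₀ hα₂).const_mul (α₂ * Real.exp (α₂ * μ₀))
    refine MeasureTheory.IntegrableOn.congr_fun h (fun z _ => ?_) measurableSet_Ioi
    show α₂ * Real.exp (α₂ * μ₀) * Real.exp (-α₂ * z) = α₂ * Real.exp (-α₂ * (z - μ₀))
    rw [mul_assoc, ← Real.exp_add]
    congr 1
    ring
  have hI₃ : IntegrableOn g₃ (Set.Ioi γ₀) := by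
    have h : IntegrableOn (fun z : ℝ => α₃ * Real.exp (α₃ * γ₀) * Real.exp (-α₃ * z))
        (Set.Ioi γ₀) := (exp_neg_integrableOn_Ioi γ₀ hα₃).const_mul (α₃ * Real.exp (α₃ * γ₀))
    refine MeasureTheory.IntegrableOn.congr_fun h (fun z _ => ?_) measurableSet_Ioi
    show α₃ * Real.exp (α₃ * γ₀) * Real.exp (-α₃ * z) = α₃ * Real.exp (-α₃ * (z - γ₀))
    rw [mul_assoc, ← Real.exp_add]
    congr 1
    ring
  have fin₁ := hI₁.setLIntegral_lt_top
  have fin₂ := hI₂.setLIntegral_lt_top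
  have fin₃ := hI₃.setLIntegral_lt_top
  set I₂ : ℝ≥0∞ := ∫⁻ z in Set.Ioi μ₀, ENNReal.ofReal (g₂ z) with hI₂def
  set I₃ : ℝ≥0∞ := ∫⁻ z in Set.Ioi γ₀, ENNReal.ofReal (g₃ z) with hI₃def
  -- pointwise bound
  have hbound : ∀ z₁ ∈ Set.Ioi (0 : ℝ), ∀ z₂ ∈ Set.Ioi μ₀, ∀ z₃ ∈ Set.Ioi γ₀,
      ((∑ n ∈ Finset.range K, (z₁ / z₂) ^ n / n.factorial
          + (z₁ / z₂) ^ K / K.factorial * Real.exp (z₁ / z₃))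
        * (α₁ * α₂ * α₃
          * Real.exp (-α₁ * z₁ - α₂ * (z₂ - μ₀) - α₃ * (z₃ - γ₀))))
      ≤ g₁ z₁ * g₂ z₂ * g₃ z₃ := by
    intro z₁ hz₁ z₂ hz₂ z₃ hz₃
    rw [Set.mem_Ioi] at hz₁ hz₂ hz₃
    have hz₂pos : 0 < z₂ := lt_trans hμ₀ hz₂
    have hz₃pos : 0 < z₃ := lt_trans hγ₀pos hz₃
    obtain ⟨t, ht⟩ : ∃ t : ℝ, t = 1 + z₁ / μ₀ := ⟨_, rfl⟩
    have ht1 : 1 ≤ t := by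
      have : 0 ≤ z₁ / μ₀ := by positivity
      linarith
    have hx0 : 0 ≤ z₁ / z₂ := by positivity
    have hxt : z₁ / z₂ ≤ t := by
      have : z₁ / z₂ ≤ z₁ / μ₀ := div_le_div_of_nonneg_left hz₁.le hμ₀ hz₂.le
      linarith
    have hE1 : 1 ≤ Real.exp (z₁ / γ₀) :=
      Real.one_le_exp (by positivity)
    have hB : (∑ n ∈ Finset.range K, (z₁ / z₂) ^ n / n.factorial
          + (z₁ / z₂) ^ K / K.factorial * Real.exp (z₁ / z₃))
        ≤ ((K : ℝ) + 1) * (t ^ K * Real.exp (z₁ / γ₀)) := by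
      have hsum : (∑ n ∈ Finset.range K, (z₁ / z₂) ^ n / n.factorial : ℝ)
          ≤ (K : ℝ) * t ^ K := by
        calc (∑ n ∈ Finset.range K, (z₁ / z₂) ^ n / n.factorial : ℝ)
            ≤ ∑ n ∈ Finset.range K, t ^ K := by
              refine Finset.sum_le_sum fun n hn => ?_
              calc ((z₁ / z₂) ^ n / n.factorial : ℝ)
                  ≤ (z₁ / z₂) ^ n := by
                    refine div_le_self (by positivity) ?_
                    exact_mod_cast n.factorial_pos
                _ ≤ t ^ n := pow_le_pow_left₀ hx0 hxt n
                _ ≤ t ^ K := pow_le_pow_right₀ ht1 (Finset.mem_range.mp hn).le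
          _ = (K : ℝ) * t ^ K := by
              rw [Finset.sum_const, Finset.card_range, nsmul_eq_mul]
      have hterm : (z₁ / z₂) ^ K / K.factorial * Real.exp (z₁ / z₃)
          ≤ t ^ K * Real.exp (z₁ / γ₀) := by
        refine mul_le_mul ?_ ?_ (Real.exp_pos _).le (by positivity)
        · calc ((z₁ / z₂) ^ K / K.factorial : ℝ)
              ≤ (z₁ / z₂) ^ K := by
                refine div_le_self (by positivity) ?_
                exact_mod_cast K.factorial_pos
            _ ≤ t ^ K := pow_le_pow_left₀ hx0 hxt K
        · exact Real.exp_le_exp.mpr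
            (div_le_div_of_nonneg_left hz₁.le hγ₀pos hz₃.le)
      have htK : (0:ℝ) ≤ t ^ K := by positivity
      nlinarith [mul_nonneg (mul_nonneg (Nat.cast_nonneg K : (0:ℝ) ≤ K) htK)
        (sub_nonneg.mpr hE1)]
    have hC : (0:ℝ) ≤ α₁ * α₂ * α₃
        * Real.exp (-α₁ * z₁ - α₂ * (z₂ - μ₀) - α₃ * (z₃ - γ₀)) := by positivity
    calc _ ≤ (((K : ℝ) + 1) * (t ^ K * Real.exp (z₁ / γ₀)))
          * (α₁ * α₂ * α₃
            * Real.exp (-α₁ * z₁ - α₂ * (z₂ - μ₀) - α₃ * (z₃ - γ₀))) :=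
        mul_le_mul_of_nonneg_right hB hC
      _ = g₁ z₁ * g₂ z₂ * g₃ z₃ := by
        show _ = ((K : ℝ) + 1) * α₁ * ((1 + z₁ / μ₀) ^ K * Real.exp (-(α₁ - 1 / γ₀) * z₁))
          * (α₂ * Real.exp (-α₂ * (z₂ - μ₀))) * (α₃ * Real.exp (-α₃ * (z₃ - γ₀)))
        have hexp1 : Real.exp (-(α₁ - 1 / γ₀) * z₁)
            = Real.exp (z₁ / γ₀) * Real.exp (-α₁ * z₁) := by
          rw [← Real.exp_add]
          congr 1
          field_simp
          ring
        have hexp2 : Real.exp (-α₁ * z₁ - α₂ * (z₂ - μ₀) - α₃ * (z₃ - γ₀))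
            = Real.exp (-α₁ * z₁) * Real.exp (-α₂ * (z₂ - μ₀))
              * Real.exp (-α₃ * (z₃ - γ₀)) := by
          rw [← Real.exp_add, ← Real.exp_add]
          congr 1
          ring
        rw [ht, hexp1, hexp2]
        ring
  -- chain of bounds
  have step : ∀ z₁ ∈ Set.Ioi (0 : ℝ),
      (∫⁻ z₂ in Set.Ioi μ₀, ∫⁻ z₃ in Set.Ioi γ₀,
        ENNReal.ofReal
          ((∑ n ∈ Finset.range K, (z₁ / z₂) ^ n / n.factorial
              + (z₁ / z₂) ^ K / K.factorial * Real.exp (z₁ / z₃))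
            * (α₁ * α₂ * α₃
              * Real.exp (-α₁ * z₁ - α₂ * (z₂ - μ₀) - α₃ * (z₃ - γ₀)))))
      ≤ ENNReal.ofReal (g₁ z₁) * (I₂ * I₃) := by
    intro z₁ hz₁
    have inner : ∀ z₂ ∈ Set.Ioi μ₀,
        (∫⁻ z₃ in Set.Ioi γ₀,
          ENNReal.ofReal
            ((∑ n ∈ Finset.range K, (z₁ / z₂) ^ n / n.factorial
                + (z₁ / z₂) ^ K / K.factorial * Real.exp (z₁ / z₃))
              * (α₁ * α₂ * α₃
                * Real.exp (-α₁ * z₁ - α₂ * (z₂ - μ₀) - α₃ * (z₃ - γ₀)))))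
        ≤ (ENNReal.ofReal (g₁ z₁) * ENNReal.ofReal (g₂ z₂)) * I₃ := by
      intro z₂ hz₂
      calc _ ≤ ∫⁻ z₃ in Set.Ioi γ₀,
            (ENNReal.ofReal (g₁ z₁) * ENNReal.ofReal (g₂ z₂)) * ENNReal.ofReal (g₃ z₃) := by
            refine setLIntegral_mono' measurableSet_Ioi fun z₃ hz₃ => ?_
            have h1 : (0:ℝ) ≤ g₁ z₁ := by
              show (0:ℝ) ≤ ((K : ℝ) + 1) * α₁
                * ((1 + z₁ / μ₀) ^ K * Real.exp (-(α₁ - 1 / γ₀) * z₁))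
              have hz₁' : (0:ℝ) < z₁ := hz₁
              positivity
            have h2 : (0:ℝ) ≤ g₂ z₂ := by
              show (0:ℝ) ≤ α₂ * Real.exp (-α₂ * (z₂ - μ₀))
              positivity
            rw [← ENNReal.ofReal_mul h1, ← ENNReal.ofReal_mul (mul_nonneg h1 h2)]
            exact ENNReal.ofReal_le_ofReal (hbound z₁ hz₁ z₂ hz₂ z₃ hz₃)
        _ = (ENNReal.ofReal (g₁ z₁) * ENNReal.ofReal (g₂ z₂)) * I₃ :=
            lintegral_const_mul' _ _ (by finiteness)
    calc _ ≤ ∫⁻ z₂ in Set.Ioi μ₀,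
          (ENNReal.ofReal (g₁ z₁) * ENNReal.ofReal (g₂ z₂)) * I₃ :=
          setLIntegral_mono' measurableSet_Ioi inner
      _ = ∫⁻ z₂ in Set.Ioi μ₀,
          (ENNReal.ofReal (g₁ z₁) * I₃) * ENNReal.ofReal (g₂ z₂) := by
          congr 1; funext z₂; ring
      _ = (ENNReal.ofReal (g₁ z₁) * I₃) * I₂ :=
          lintegral_const_mul' _ _ (ENNReal.mul_ne_top ENNReal.ofReal_ne_top fin₃.ne)
      _ = ENNReal.ofReal (g₁ z₁) * (I₂ * I₃) := by ring
  calc _ ≤ ∫⁻ z₁ in Set.Ioi (0:ℝ), ENNReal.ofReal (g₁ z₁) * (I₂ * I₃) :=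
      setLIntegral_mono' measurableSet_Ioi step
    _ = (∫⁻ z₁ in Set.Ioi (0:ℝ), ENNReal.ofReal (g₁ z₁)) * (I₂ * I₃) :=
      lintegral_mul_const' _ _ (ENNReal.mul_ne_top fin₂.ne fin₃.ne)
    _ < ⊤ := ENNReal.mul_lt_top fin₁ (ENNReal.mul_lt_top fin₂ fin₃)
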